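/- Let F be a symmetric closed relation on 2^ω all of whose vertical sections F_α = {β | (α,β) ∈ F} are nowhere dense. Then there is an injective continuous map f : 2^ω → 2^ω such that f⁻¹(P_f) = P_f (where P_f is the set of eventually-zero sequences) and (f(α), f(β)) ∉ F whenever α ≠ β. -/

import Mathlib

namespace ACNRaux

/-- `α` extends the finite string `l`. -/
def Ext (l : List Bool) (α : ℕ → Bool) : Prop := ∀ i < l.length, α i = l.getD i false

def cyl (l : List Bool) : Set (ℕ → Bool) := {α | Ext l α}

lemma cyl_eq (l : List Bool) :
    cyl l = ⋂ (i : Fin l.length), {α : ℕ → Bool | α (i : ℕ) = l.getD (i : ℕ) false} := by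
  ext α
  simp only [cyl, Ext, Set.mem_setOf_eq, Set.mem_iInter]
  exact ⟨fun h i => h i i.2, fun h i hi => h ⟨i, hi⟩⟩

lemma coord_set_eq (l : List Bool) (i : ℕ) :
    {α : ℕ → Bool | α i = l.getD i false} =
      (fun α : ℕ → Bool => α i) ⁻¹' {l.getD i false} := by
  ext α; simp

lemma isOpen_cyl (l : List Bool) : IsOpen (cyl l) := by
  rw [cyl_eq]
  refine isOpen_iInter_of_finite fun i => ?_
  rw [coord_set_eq]
  exact IsOpen.preimage (continuous_apply (i : ℕ)) (isOpen_discrete _)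

lemma isClosed_cyl (l : List Bool) : IsClosed (cyl l) := by
  rw [cyl_eq]
  refine isClosed_iInter fun i => ?_
  rw [coord_set_eq]
  exact IsClosed.preimage (continuous_apply (i : ℕ)) (isClosed_discrete _)

lemma isCompact_cyl (l : List Bool) : IsCompact (cyl l) :=
  (isClosed_cyl l).isCompact

lemma self_mem_cyl (l : List Bool) : (fun n => l.getD n false) ∈ cyl l := fun _ _ => rfl

lemma nbhd_basis {U : Set (ℕ → Bool)} (hU : IsOpen U) {β : ℕ → Bool} (hβ : β ∈ U) :
    ∃ m, ∀ γ : ℕ → Bool, (∀ i < m, γ i = β i) → γ ∈ U := by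
  obtain ⟨I, u, hIu, hsub⟩ := isOpen_pi_iff.mp hU β hβ
  refine ⟨(I.sup id) + 1, fun γ hγ => hsub ?_⟩
  intro i hi
  have : γ i = β i := hγ i (Nat.lt_succ_of_le (Finset.le_sup (f := id) hi))
  rw [this]; exact (hIu i hi).2

lemma getD_replicate_false (j i : ℕ) : (List.replicate j false).getD i false = false := by
  simp [List.getD_eq_getElem?_getD, List.getElem?_replicate]
  split <;> rfl

/-- The key avoidance lemma: below any node `u` we can find a pure-zero extension and a
1-leading extension whose cylinders form a box disjoint from `F`. -/
theorem avoid (F : Set ((ℕ → Bool) × (ℕ → Bool))) (hFcl : IsClosed F)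
    (hFnwd : ∀ α, IsNowhereDense {β | (α, β) ∈ F}) (u : List Bool) :
    ∃ p : ℕ × List Bool, 1 ≤ p.1 ∧ p.2.head? = some true ∧
      ∀ α β : ℕ → Bool, Ext (u ++ List.replicate p.1 false) α → Ext (u ++ p.2) β →
        (α, β) ∉ F := by
  classical
  set q : ℕ → Bool := fun n => u.getD n false with hq
  set S : Set (ℕ → Bool) := {β | (q, β) ∈ F} with hS
  have hScl : IsClosed S := hFcl.preimage (Continuous.prodMk_right q)
  have hSnwd : interior (closure S) = ∅ := hFnwd q
  set L := u.length with hL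
  -- Step A: a point of cyl (u ++ [true]) outside S
  have hnot : ¬ (cyl (u ++ [true]) ⊆ S) := by
    intro h
    have h1 : cyl (u ++ [true]) ⊆ interior (closure S) :=
      (isOpen_cyl _).subset_interior_iff.mpr (h.trans subset_closure)
    have := h1 (self_mem_cyl _)
    rw [hSnwd] at this; exact this
  obtain ⟨β₀, hβ₀c, hβ₀S⟩ := Set.not_subset.mp hnot
  obtain ⟨m, hm⟩ := nbhd_basis hScl.isOpen_compl hβ₀S
  set m' := max m (L + 1) with hm'
  have hLm' : L + 1 ≤ m' := le_max_right _ _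
  set w : List Bool := List.ofFn (fun i : Fin (m' - L) => β₀ (L + i)) with hw
  have hwlen : w.length = m' - L := by simp [hw]
  have hβ₀L : β₀ L = true := by
    have := hβ₀c L (by simp [hL])
    rwa [List.getD_append_right u [true] false L le_rfl, Nat.sub_self] at this
  have hwhead : w.head? = some true := by
    have h0 : 0 < w.length := by omega
    rw [List.head?_eq_getElem?, List.getElem?_eq_getElem h0]
    have : w[0] = β₀ (L + (0:ℕ)) := by
      simp [hw]
    rw [this]; simp [hβ₀L]
  -- cyl (u ++ w) avoids S
  have hcylS : ∀ β ∈ cyl (u ++ w), β ∉ S := by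
    intro β hβ
    refine hm β ?_
    intro i hi
    rcases lt_or_ge i L with hiL | hiL
    · have h1 : β i = u.getD i false := by
        have := hβ i (by rw [List.length_append]; omega)
        rwa [List.getD_append u w false i hiL] at this
      have h2 : β₀ i = u.getD i false := by
        have := hβ₀c i (by rw [List.length_append]; omega)
        rwa [List.getD_append u [true] false i hiL] at this
      rw [h1, h2]
    · have him : i < m' := lt_of_lt_of_le hi (le_max_left _ _)
      have hiw : i - L < w.length := by omega
      have h1 : β i = w.getD (i - L) false := by
        have := hβ i (by rw [List.length_append]; omega)
        rwa [List.getD_append_right u w false i hiL] at this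
      have h2 : w.getD (i - L) false = β₀ (L + (i - L)) := by
        rw [List.getD_eq_getElem?_getD, List.getElem?_eq_getElem hiw]
        simp [hw]
      rw [h1, h2]
      congr 1; omega
  -- Step C: tube lemma
  have hbox : ({q} : Set (ℕ → Bool)) ×ˢ cyl (u ++ w) ⊆ Fᶜ := by
    rintro ⟨a, b⟩ ⟨ha, hb⟩
    simp only [Set.mem_singleton_iff] at ha
    subst ha
    exact hcylS b hb
  obtain ⟨U, V, hUo, _, hqU, hVsub, hUV⟩ :=
    generalized_tube_lemma isCompact_singleton (isCompact_cyl (u ++ w))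
      hFcl.isOpen_compl hbox
  obtain ⟨m₂, hm₂⟩ := nbhd_basis hUo (hqU rfl)
  set k := max 1 (m₂ - L) with hk
  refine ⟨(k, w), le_max_left _ _, hwhead, ?_⟩
  intro α β hα hβ hF
  have hαU : α ∈ U := by
    refine hm₂ α ?_
    intro i hi
    rcases lt_or_ge i L with hiL | hiL
    · have h1 : α i = u.getD i false := by
        have := hα i (by rw [List.length_append, List.length_replicate]; omega)
        rwa [List.getD_append u _ false i hiL] at this
      rw [h1]
    · have hik : i - L < k := by omega
      have h1 : α i = false := by
        have := hα i (by rw [List.length_append, List.length_replicate]; omega)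
        rw [List.getD_append_right u _ false i hiL] at this
        rw [this, getD_replicate_false]
      have h2 : q i = false := by
        rw [hq]
        simp only []
        rw [List.getD_eq_getElem?_getD, List.getElem?_eq_none (by omega)]
        rfl
      rw [h1, h2]
  exact hUV (Set.mk_mem_prod hαU (hVsub hβ)) hF

end ACNRaux
namespace ACNRaux

variable (F : Set ((ℕ → Bool) × (ℕ → Bool))) (hFcl : IsClosed F)
  (hFnwd : ∀ α, IsNowhereDense {β | (α, β) ∈ F})

noncomputable def KW (u : List Bool) : ℕ × List Bool :=
  (avoid F hFcl hFnwd u).choose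

lemma KW_spec (u : List Bool) :
    1 ≤ (KW F hFcl hFnwd u).1 ∧ (KW F hFcl hFnwd u).2.head? = some true ∧
      ∀ α β : ℕ → Bool, Ext (u ++ List.replicate (KW F hFcl hFnwd u).1 false) α →
        Ext (u ++ (KW F hFcl hFnwd u).2) β → (α, β) ∉ F :=
  (avoid F hFcl hFnwd u).choose_spec

/-- The extension appended below node with image `u` when the branch bit is `b`. -/
noncomputable def extStr (u : List Bool) (b : Bool) : List Bool :=
  if b then (KW F hFcl hFnwd u).2 else List.replicate (KW F hFcl hFnwd u).1 false

lemma extStr_len (u : List Bool) (b : Bool) : 1 ≤ (extStr F hFcl hFnwd u b).length := by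
  rcases b with _ | _
  · simp only [extStr, if_neg Bool.false_ne_true, List.length_replicate]
    exact (KW_spec F hFcl hFnwd u).1
  · simp only [extStr, if_pos rfl]
    have h := (KW_spec F hFcl hFnwd u).2.1
    cases hw : (KW F hFcl hFnwd u).2 with
    | nil => rw [hw] at h; simp at h
    | cons a t => simp [hw]

/-- The (reversed) initial segment of length `n` of `α`. -/
def segr (α : ℕ → Bool) : ℕ → List Bool
  | 0 => []
  | n + 1 => α n :: segr α n

/-- The Cantor scheme: image string of a (reversed) node. -/
noncomputable def Phi : List Bool → List Bool
  | [] => []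
  | b :: s => Phi s ++ extStr F hFcl hFnwd (Phi s) b

lemma segr_eq_of_agree {α β : ℕ → Bool} {n : ℕ} (h : ∀ i < n, α i = β i) :
    segr α n = segr β n := by
  induction n with
  | zero => rfl
  | succ n ih =>
    simp only [segr]
    rw [h n (Nat.lt_succ_self n), ih fun i hi => h i (Nat.lt_succ_of_lt hi)]

lemma phi_succ (α : ℕ → Bool) (n : ℕ) :
    Phi F hFcl hFnwd (segr α (n + 1)) =
      Phi F hFcl hFnwd (segr α n) ++
        extStr F hFcl hFnwd (Phi F hFcl hFnwd (segr α n)) (α n) := rfl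

lemma phi_prefix (α : ℕ → Bool) {n m : ℕ} (h : n ≤ m) :
    Phi F hFcl hFnwd (segr α n) <+: Phi F hFcl hFnwd (segr α m) := by
  induction m with
  | zero => rw [Nat.le_zero.mp h]
  | succ m ih =>
    rcases Nat.lt_succ_iff_lt_or_eq.mp (Nat.lt_succ_of_le h) with h' | h'
    · exact (ih (Nat.lt_succ_iff.mp h')).trans
        ⟨_, (phi_succ F hFcl hFnwd α m).symm⟩
    · rw [h']

lemma phi_len (α : ℕ → Bool) (n : ℕ) : n ≤ (Phi F hFcl hFnwd (segr α n)).length := by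
  induction n with
  | zero => exact Nat.zero_le _
  | succ n ih =>
    rw [phi_succ, List.length_append]
    have := extStr_len F hFcl hFnwd (Phi F hFcl hFnwd (segr α n)) (α n)
    omega

lemma prefix_getD {l₁ l₂ : List Bool} (h : l₁ <+: l₂) {i : ℕ} (hi : i < l₁.length)
    (d : Bool) : l₂.getD i d = l₁.getD i d := by
  obtain ⟨t, rfl⟩ := h
  exact List.getD_append _ _ _ _ hi

/-- The embedding. -/
noncomputable def ff (α : ℕ → Bool) : ℕ → Bool :=
  fun n => (Phi F hFcl hFnwd (segr α (n + 1))).getD n false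

lemma ff_eval (α : ℕ → Bool) {n m : ℕ} (h : n < m) :
    ff F hFcl hFnwd α n = (Phi F hFcl hFnwd (segr α m)).getD n false := by
  have h1 : n < (Phi F hFcl hFnwd (segr α (n + 1))).length :=
    lt_of_lt_of_le (Nat.lt_succ_self n) (phi_len F hFcl hFnwd α (n + 1))
  exact (prefix_getD (phi_prefix F hFcl hFnwd α h) h1 false).symm

lemma ff_ext (α : ℕ → Bool) (m : ℕ) :
    Ext (Phi F hFcl hFnwd (segr α m)) (ff F hFcl hFnwd α) := by
  intro i hi
  rcases le_total m (i + 1) with h | h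
  · show (Phi F hFcl hFnwd (segr α (i + 1))).getD i false = _
    exact prefix_getD (phi_prefix F hFcl hFnwd α h) hi false
  · exact ff_eval F hFcl hFnwd α h

/-- Head of the 1-side extension is `true`. -/
lemma extStr_true_getD (u : List Bool) :
    (extStr F hFcl hFnwd u true).getD 0 false = true := by
  have h := (KW_spec F hFcl hFnwd u).2.1
  simp only [extStr, if_pos rfl]
  cases hw : (KW F hFcl hFnwd u).2 with
  | nil => rw [hw] at h; simp at h
  | cons a t => rw [hw] at h; simp at h; simp [h]

/-- Main splitting lemma. -/
lemma key (α β : ℕ → Bool) (n : ℕ) (hagree : ∀ i < n, α i = β i)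
    (hα : α n = false) (hβ : β n = true) :
    (ff F hFcl hFnwd α, ff F hFcl hFnwd β) ∉ F ∧
      ff F hFcl hFnwd α ≠ ff F hFcl hFnwd β := by
  set u := Phi F hFcl hFnwd (segr α n) with hu
  have hsame : Phi F hFcl hFnwd (segr β n) = u := by
    rw [hu, segr_eq_of_agree hagree]
  set k := (KW F hFcl hFnwd u).1 with hk
  set w := (KW F hFcl hFnwd u).2 with hw
  have hαs : Phi F hFcl hFnwd (segr α (n + 1)) = u ++ List.replicate k false := by
    rw [phi_succ, ← hu, hα]; simp [extStr]; rfl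
  have hβs : Phi F hFcl hFnwd (segr β (n + 1)) = u ++ w := by
    rw [phi_succ, hsame, hβ]; simp [extStr]; rfl
  have hαe : Ext (u ++ List.replicate k false) (ff F hFcl hFnwd α) := by
    rw [← hαs]; exact ff_ext F hFcl hFnwd α (n + 1)
  have hβe : Ext (u ++ w) (ff F hFcl hFnwd β) := by
    rw [← hβs]; exact ff_ext F hFcl hFnwd β (n + 1)
  have spec := KW_spec F hFcl hFnwd u
  refine ⟨spec.2.2 _ _ hαe hβe, ?_⟩
  set L := u.length with hL
  have hk1 : 1 ≤ k := spec.1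
  have hw1 : 1 ≤ w.length := by
    have h := spec.2.1
    rw [← hw] at h
    refine List.length_pos_iff.mpr fun hnil => ?_
    rw [hnil] at h; simp at h
  have hfα : ff F hFcl hFnwd α L = false := by
    have := hαe L (by rw [List.length_append, List.length_replicate]; omega)
    rw [List.getD_append_right u _ false L le_rfl, Nat.sub_self,
      getD_replicate_false] at this
    exact this
  have hfβ : ff F hFcl hFnwd β L = true := by
    have := hβe L (by rw [List.length_append]; omega)
    rw [List.getD_append_right u _ false L le_rfl, Nat.sub_self] at this
    rw [this]
    have h2 := extStr_true_getD F hFcl hFnwd u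
    simpa [extStr] using h2
  intro h
  rw [congrFun h L, hfβ] at hfα
  simp at hfα

lemma ff_cont : Continuous (ff F hFcl hFnwd) := by
  apply continuous_pi
  intro n
  have hfac : (fun α => ff F hFcl hFnwd α n) =
      (fun v : Fin (n + 1) → Bool =>
        (Phi F hFcl hFnwd
          (segr (fun i => if h : i < n + 1 then v ⟨i, h⟩ else false) (n + 1))).getD n false)
        ∘ (fun α (i : Fin (n + 1)) => α (i : ℕ)) := by
    funext α
    simp only [Function.comp_apply, ff]
    congr 1
    apply congrArg
    apply segr_eq_of_agree
    intro i hi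
    simp [dif_pos hi]
    exact fun _ => by omega
  rw [hfac]
  exact Continuous.comp (continuous_of_discreteTopology)
    (continuous_pi fun i => continuous_apply (i : ℕ))

lemma phi_tail (α : ℕ → Bool) (N : ℕ) (hN : ∀ n ≥ N, α n = false) :
    ∀ m, N ≤ m → ∃ j, Phi F hFcl hFnwd (segr α m) =
      Phi F hFcl hFnwd (segr α N) ++ List.replicate j false := by
  intro m hm
  induction m with
  | zero => exact ⟨0, by rw [Nat.le_zero.mp hm]; simp⟩
  | succ m ih =>
    rcases Nat.lt_succ_iff_lt_or_eq.mp (Nat.lt_succ_of_le hm) with h' | h'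
    · obtain ⟨j, hj⟩ := ih (Nat.lt_succ_iff.mp h')
      have hαm : α m = false := hN m (by omega)
      refine ⟨j + (KW F hFcl hFnwd (Phi F hFcl hFnwd (segr α m))).1, ?_⟩
      rw [phi_succ, hαm]
      simp only [extStr, if_neg Bool.false_ne_true]
      rw [hj, List.replicate_add, List.append_assoc]
    · exact ⟨0, by rw [h']; simp⟩

end ACNRaux
/-- The set of eventually-zero binary sequences. -/
def Pfin : Set (ℕ → Bool) := {α | ∃ N : ℕ, ∀ n ≥ N, α n = false}

theorem avoid_closed_nwd_relation
    (F : Set ((ℕ → Bool) × (ℕ → Bool))) (hFcl : IsClosed F)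
    (hFsym : ∀ α β, (α, β) ∈ F → (β, α) ∈ F)
    (hFnwd : ∀ α, IsNowhereDense {β | (α, β) ∈ F}) :
    ∃ f : (ℕ → Bool) → (ℕ → Bool), Function.Injective f ∧ Continuous f ∧
      f ⁻¹' Pfin = Pfin ∧ ∀ α β, α ≠ β → (f α, f β) ∉ F := by
  classical
  open ACNRaux in
  refine ⟨ff F hFcl hFnwd, ?_, ff_cont F hFcl hFnwd, ?_, ?_⟩
  -- helper: split at least disagreement
  · -- injectivity
    intro α β hfeq
    by_contra hne
    have hex : ∃ n, α n ≠ β n := by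
      by_contra h
      push_neg at h
      exact hne (funext h)
    set n := Nat.find hex with hn
    have hagree : ∀ i < n, α i = β i := fun i hi => by
      have := Nat.find_min hex hi
      simpa using this
    have hdiff : α n ≠ β n := Nat.find_spec hex
    cases hαn : α n <;> cases hβn : β n
    · rw [hαn, hβn] at hdiff; exact hdiff rfl
    · exact (ACNRaux.key F hFcl hFnwd α β n hagree hαn hβn).2 hfeq
    · exact (ACNRaux.key F hFcl hFnwd β α n (fun i hi => (hagree i hi).symm)
        hβn hαn).2 hfeq.symm
    · rw [hαn, hβn] at hdiff; exact hdiff rfl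
  · -- preimage of Pfin
    ext α
    simp only [Set.mem_preimage]
    constructor
    · rintro ⟨N, hN⟩
      refine ⟨N, fun n hn => ?_⟩
      by_contra hαn
      have hαn : α n = true := by
        cases h : α n
        · exact absurd h hαn
        · rfl
      set p := (ACNRaux.Phi F hFcl hFnwd (ACNRaux.segr α n)).length with hp
      have hnp : n ≤ p := ACNRaux.phi_len F hFcl hFnwd α n
      have hstep : ACNRaux.Phi F hFcl hFnwd (ACNRaux.segr α (n + 1)) =
          ACNRaux.Phi F hFcl hFnwd (ACNRaux.segr α n) ++
            ACNRaux.extStr F hFcl hFnwd (ACNRaux.Phi F hFcl hFnwd (ACNRaux.segr α n)) true := by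
        rw [ACNRaux.phi_succ, hαn]
      have hlen : p < (ACNRaux.Phi F hFcl hFnwd (ACNRaux.segr α (n + 1))).length := by
        rw [hstep, List.length_append]
        have := ACNRaux.extStr_len F hFcl hFnwd
          (ACNRaux.Phi F hFcl hFnwd (ACNRaux.segr α n)) true
        omega
      have hval : ACNRaux.ff F hFcl hFnwd α p = true := by
        have h1 := ACNRaux.ff_ext F hFcl hFnwd α (n + 1) p hlen
        rw [h1, hstep, List.getD_append_right _ _ false p le_rfl, Nat.sub_self]
        exact ACNRaux.extStr_true_getD F hFcl hFnwd _
      have := hN p (le_trans hn hnp)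
      rw [hval] at this
      simp at this
    · rintro ⟨N, hN⟩
      refine ⟨(ACNRaux.Phi F hFcl hFnwd (ACNRaux.segr α N)).length, fun n hn => ?_⟩
      have hmax : n < max (n + 1) N := lt_of_lt_of_le (Nat.lt_succ_self n) (le_max_left _ _)
      rw [ACNRaux.ff_eval F hFcl hFnwd α hmax]
      obtain ⟨j, hj⟩ := ACNRaux.phi_tail F hFcl hFnwd α N hN (max (n + 1) N) (le_max_right _ _)
      rw [hj, List.getD_append_right _ _ false n hn, ACNRaux.getD_replicate_false]
  · -- F-avoidance
    intro α β hne
    have hex : ∃ n, α n ≠ β n := by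
      by_contra h
      push_neg at h
      exact hne (funext h)
    set n := Nat.find hex with hn
    have hagree : ∀ i < n, α i = β i := fun i hi => by
      have := Nat.find_min hex hi
      simpa using this
    have hdiff : α n ≠ β n := Nat.find_spec hex
    cases hαn : α n <;> cases hβn : β n
    · exact (hdiff (hαn.trans hβn.symm)).elim
    · exact (ACNRaux.key F hFcl hFnwd α β n hagree hαn hβn).1
    · intro hmem
      exact (ACNRaux.key F hFcl hFnwd β α n (fun i hi => (hagree i hi).symm)
        hβn hαn).1 (hFsym _ _ hmem)
    · exact (hdiff (hαn.trans hβn.symm)).elim
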